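/- With the cutoff function Θ_k^{(n)}(𝐱) = exp(−(2^n/ℓ^ε) Σ_{i≤k} Σ_{j≠i} h(x_i−x_j)), where h(x) = exp(−√(x²+ℓ²)/ℓ), there is a constant C (depending only on ε and the dimension, not on N, k, n, ℓ) such that for all 𝐱: Σ_{j=1}^N |∇_j Θ_k^{(n)}(𝐱)|² / Θ_k^{(n)}(𝐱) ≤ C ℓ^{−2} Θ_k^{(n−1)}(𝐱). -/

import Mathlib

open Finset

noncomputable section

/-- `h(x) = exp(−√(x²+ℓ²)/ℓ)`. -/
def hcut (ℓ : ℝ) (x : EuclideanSpace ℝ (Fin 3)) : ℝ :=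
  Real.exp (-(Real.sqrt (‖x‖ ^ 2 + ℓ ^ 2)) / ℓ)

/-- `Θ_k^{(n)}(𝐱) = exp(−(2^n/ℓ^ε) Σ_{i≤k} Σ_{j≠i} h(x_i−x_j))`. -/
def ThetaCut (N : ℕ) (ℓ ε : ℝ) (k n : ℕ) (x : Fin N → EuclideanSpace ℝ (Fin 3)) : ℝ :=
  Real.exp (-((2 : ℝ) ^ n / ℓ ^ ε) *
    ∑ i ∈ univ.filter (fun i : Fin N => (i : ℕ) < k),
      ∑ j ∈ univ.filter (fun j : Fin N => j ≠ i), hcut ℓ (x i - x j))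

def Dh (ℓ : ℝ) (y : EuclideanSpace ℝ (Fin 3)) : EuclideanSpace ℝ (Fin 3) →L[ℝ] ℝ :=
  Real.exp (-1 / ℓ * Real.sqrt (‖y‖ ^ 2 + ℓ ^ 2)) •
    ((-1 / ℓ) • ((1 / (2 * Real.sqrt (‖y‖ ^ 2 + ℓ ^ 2))) • (2 • (innerSL ℝ y))))

lemma hcut_hasFDerivAt {ℓ : ℝ} (hℓ : 0 < ℓ) (y : EuclideanSpace ℝ (Fin 3)) :
    HasFDerivAt (hcut ℓ) (Dh ℓ y) y := by
  have hq : HasFDerivAt (fun y : EuclideanSpace ℝ (Fin 3) => ‖y‖ ^ 2 + ℓ ^ 2)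
      (2 • innerSL ℝ y) y := ((hasStrictFDerivAt_norm_sq y).hasFDerivAt).add_const _
  have hpos : 0 < ‖y‖ ^ 2 + ℓ ^ 2 := by positivity
  have he := ((hq.sqrt hpos.ne').const_mul (-1 / ℓ)).exp
  have hfun : (fun y : EuclideanSpace ℝ (Fin 3) =>
      Real.exp (-1 / ℓ * Real.sqrt (‖y‖ ^ 2 + ℓ ^ 2))) = hcut ℓ := by
    funext z; unfold hcut; congr 1; ring
  rw [hfun] at he
  exact he

lemma hcut_pos {ℓ : ℝ} (y : EuclideanSpace ℝ (Fin 3)) : 0 < hcut ℓ y := Real.exp_pos _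

lemma Dh_norm_le {ℓ : ℝ} (hℓ : 0 < ℓ) (y : EuclideanSpace ℝ (Fin 3)) :
    ‖Dh ℓ y‖ ≤ hcut ℓ y / ℓ := by
  have hpos : 0 < ‖y‖ ^ 2 + ℓ ^ 2 := by positivity
  set s := Real.sqrt (‖y‖ ^ 2 + ℓ ^ 2) with hs
  have hspos : 0 < s := Real.sqrt_pos.2 hpos
  have hys : ‖y‖ ≤ s := by
    have h2 := Real.sqrt_le_sqrt (le_add_of_nonneg_right (by positivity : (0:ℝ) ≤ ℓ ^ 2)
      (a := ‖y‖ ^ 2))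
    rwa [Real.sqrt_sq (norm_nonneg y)] at h2
  have hcv : hcut ℓ y = Real.exp (-1 / ℓ * s) := by unfold hcut; congr 1; ring
  apply ContinuousLinearMap.opNorm_le_bound _ (div_nonneg (hcut_pos y).le hℓ.le)
  intro v
  have happ : Dh ℓ y v = Real.exp (-1 / ℓ * s) * ((-1 / ℓ) * ((1 / (2 * s)) * (2 * (inner ℝ y v : ℝ)))) := by
    simp [Dh, ContinuousLinearMap.smul_apply, smul_eq_mul]; rfl
  rw [happ, hcv, Real.norm_eq_abs]
  have hip : |(inner ℝ y v : ℝ)| ≤ ‖y‖ * ‖v‖ := abs_real_inner_le_norm y v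
  have hE := Real.exp_pos (-1 / ℓ * s)
  rw [abs_mul, abs_of_pos hE]
  calc Real.exp (-1 / ℓ * s) * |(-1 / ℓ) * ((1 / (2 * s)) * (2 * (inner ℝ y v : ℝ)))|
      = Real.exp (-1 / ℓ * s) * ((1 / ℓ) * ((1 / (2 * s)) * (2 * |(inner ℝ y v : ℝ)|))) := by
        rw [abs_mul, abs_mul, abs_mul]
        rw [abs_of_pos (by positivity : (0:ℝ) < 1 / (2 * s)), abs_of_pos (by norm_num : (0:ℝ) < 2)]
        rw [abs_div, abs_neg, abs_one, abs_of_pos hℓ]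
    _ ≤ Real.exp (-1 / ℓ * s) * ((1 / ℓ) * ((1 / (2 * s)) * (2 * (s * ‖v‖)))) := by
        gcongr
        exact hip.trans (by nlinarith [norm_nonneg v])
    _ = Real.exp (-1 / ℓ * s) / ℓ * ‖v‖ := by field_simp

def Lproj (N : ℕ) (i m : Fin N) :
    (Fin N → EuclideanSpace ℝ (Fin 3)) →L[ℝ] EuclideanSpace ℝ (Fin 3) :=
  ContinuousLinearMap.proj (R := ℝ) (φ := fun _ : Fin N => EuclideanSpace ℝ (Fin 3)) i -
    ContinuousLinearMap.proj m

lemma theta_fderiv (N : ℕ) (ℓ ε : ℝ) (k n : ℕ) (hℓ : 0 < ℓ)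
    (x : Fin N → EuclideanSpace ℝ (Fin 3)) :
    HasFDerivAt (ThetaCut N ℓ ε k n)
      ((ThetaCut N ℓ ε k n x) • ((-((2:ℝ)^n / ℓ^ε)) •
        ∑ i ∈ univ.filter (fun i : Fin N => (i:ℕ) < k),
          ∑ m ∈ univ.filter (fun m : Fin N => m ≠ i),
            (Dh ℓ (x i - x m)).comp (Lproj N i m))) x := by
  have hterm : ∀ i m : Fin N,
      HasFDerivAt (fun x : Fin N → EuclideanSpace ℝ (Fin 3) => hcut ℓ (x i - x m))
        ((Dh ℓ (x i - x m)).comp (Lproj N i m)) x := by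
    intro i m
    have hL : HasFDerivAt (fun v : Fin N → EuclideanSpace ℝ (Fin 3) => v i - v m)
        (Lproj N i m) x := by
      have hL0 := ((ContinuousLinearMap.proj (R := ℝ)
          (φ := fun _ : Fin N => EuclideanSpace ℝ (Fin 3)) i).hasFDerivAt
            (x := x)).sub ((ContinuousLinearMap.proj m).hasFDerivAt (x := x))
      exact hL0
    exact (hcut_hasFDerivAt hℓ (x i - x m)).comp x hL
  have hS : HasFDerivAt (fun x : Fin N → EuclideanSpace ℝ (Fin 3) =>
      ∑ i ∈ univ.filter (fun i : Fin N => (i:ℕ) < k),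
        ∑ m ∈ univ.filter (fun m : Fin N => m ≠ i), hcut ℓ (x i - x m))
      (∑ i ∈ univ.filter (fun i : Fin N => (i:ℕ) < k),
        ∑ m ∈ univ.filter (fun m : Fin N => m ≠ i),
          (Dh ℓ (x i - x m)).comp (Lproj N i m)) x :=
    HasFDerivAt.fun_sum fun i _ => HasFDerivAt.fun_sum fun m _ => hterm i m
  exact (hS.const_mul (-((2:ℝ)^n / ℓ^ε))).exp

lemma DS_apply_bound {N : ℕ} {ℓ : ℝ} (hℓ : 0 < ℓ) (k : ℕ)
    (x : Fin N → EuclideanSpace ℝ (Fin 3)) (j : Fin N) (α : Fin 3) :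
    |(∑ i ∈ univ.filter (fun i : Fin N => (i:ℕ) < k),
        ∑ m ∈ univ.filter (fun m : Fin N => m ≠ i),
          (Dh ℓ (x i - x m)).comp (Lproj N i m))
      (Pi.single j (EuclideanSpace.single α (1:ℝ)))|
    ≤ (∑ i ∈ univ.filter (fun i : Fin N => (i:ℕ) < k),
        ∑ m ∈ univ.filter (fun m : Fin N => m ≠ i),
          hcut ℓ (x i - x m) * ((if i = j then 1 else 0) + (if m = j then 1 else 0))) / ℓ := by
  classical
  set v : Fin N → EuclideanSpace ℝ (Fin 3) := Pi.single j (EuclideanSpace.single α (1:ℝ)) with hv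
  have hterm : ∀ i m : Fin N, m ≠ i →
      |(Dh ℓ (x i - x m)) (v i - v m)| ≤
        hcut ℓ (x i - x m) * ((if i = j then 1 else 0) + (if m = j then 1 else 0)) / ℓ := by
    intro i m him
    have hnorm : ‖EuclideanSpace.single α (1:ℝ)‖ = 1 := by
      rw [EuclideanSpace.norm_single]; norm_num
    have hD := Dh_norm_le hℓ (x i - x m)
    by_cases hij : i = j
    · subst hij
      have hvm : v m = 0 := Pi.single_eq_of_ne him _
      have hvi : v i = EuclideanSpace.single α (1:ℝ) := Pi.single_eq_same i _
      rw [hvi, hvm, sub_zero]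
      have h1 : |(Dh ℓ (x i - x m)) (EuclideanSpace.single α (1:ℝ))| ≤ ‖Dh ℓ (x i - x m)‖ := by
        rw [← Real.norm_eq_abs]
        calc ‖(Dh ℓ (x i - x m)) (EuclideanSpace.single α (1:ℝ))‖
            ≤ ‖Dh ℓ (x i - x m)‖ * ‖EuclideanSpace.single α (1:ℝ)‖ :=
              (Dh ℓ (x i - x m)).le_opNorm _
          _ = ‖Dh ℓ (x i - x m)‖ := by rw [hnorm, mul_one]
      have him' : ¬ (m = i) := him
      simp only [if_pos rfl, if_neg him']
      calc |(Dh ℓ (x i - x m)) (EuclideanSpace.single α (1:ℝ))| ≤ ‖Dh ℓ (x i - x m)‖ := h1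
        _ ≤ hcut ℓ (x i - x m) / ℓ := hD
        _ = hcut ℓ (x i - x m) * ((1:ℝ) + 0) / ℓ := by ring
    · by_cases hmj : m = j
      · subst hmj
        have hvi : v i = 0 := Pi.single_eq_of_ne hij _
        have hvm : v m = EuclideanSpace.single α (1:ℝ) := Pi.single_eq_same m _
        rw [hvi, hvm, zero_sub, map_neg, abs_neg]
        have h1 : |(Dh ℓ (x i - x m)) (EuclideanSpace.single α (1:ℝ))| ≤ ‖Dh ℓ (x i - x m)‖ := by
          rw [← Real.norm_eq_abs]
          calc ‖(Dh ℓ (x i - x m)) (EuclideanSpace.single α (1:ℝ))‖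
              ≤ ‖Dh ℓ (x i - x m)‖ * ‖EuclideanSpace.single α (1:ℝ)‖ :=
                (Dh ℓ (x i - x m)).le_opNorm _
            _ = ‖Dh ℓ (x i - x m)‖ := by rw [hnorm, mul_one]
        simp only [if_neg hij, if_pos rfl]
        calc |(Dh ℓ (x i - x m)) (EuclideanSpace.single α (1:ℝ))| ≤ ‖Dh ℓ (x i - x m)‖ := h1
          _ ≤ hcut ℓ (x i - x m) / ℓ := hD
          _ = hcut ℓ (x i - x m) * ((0:ℝ) + 1) / ℓ := by ring
      · have hvi : v i = 0 := Pi.single_eq_of_ne hij _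
        have hvm : v m = 0 := Pi.single_eq_of_ne hmj _
        rw [hvi, hvm, sub_zero, map_zero, abs_zero]
        simp [hij, hmj]
  calc |(∑ i ∈ univ.filter (fun i : Fin N => (i:ℕ) < k),
        ∑ m ∈ univ.filter (fun m : Fin N => m ≠ i),
          (Dh ℓ (x i - x m)).comp (Lproj N i m)) v|
      = |∑ i ∈ univ.filter (fun i : Fin N => (i:ℕ) < k),
          ∑ m ∈ univ.filter (fun m : Fin N => m ≠ i),
            (Dh ℓ (x i - x m)) (v i - v m)| := by
        simp [Lproj, ContinuousLinearMap.sum_apply, ContinuousLinearMap.comp_apply,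
          ContinuousLinearMap.sub_apply, ContinuousLinearMap.proj_apply]
    _ ≤ ∑ i ∈ univ.filter (fun i : Fin N => (i:ℕ) < k),
          |∑ m ∈ univ.filter (fun m : Fin N => m ≠ i),
            (Dh ℓ (x i - x m)) (v i - v m)| := Finset.abs_sum_le_sum_abs _ _
    _ ≤ ∑ i ∈ univ.filter (fun i : Fin N => (i:ℕ) < k),
          ∑ m ∈ univ.filter (fun m : Fin N => m ≠ i),
            |(Dh ℓ (x i - x m)) (v i - v m)| :=
        Finset.sum_le_sum fun i _ => Finset.abs_sum_le_sum_abs _ _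
    _ ≤ ∑ i ∈ univ.filter (fun i : Fin N => (i:ℕ) < k),
          ∑ m ∈ univ.filter (fun m : Fin N => m ≠ i),
            hcut ℓ (x i - x m) * ((if i = j then 1 else 0) + (if m = j then 1 else 0)) / ℓ := by
        refine Finset.sum_le_sum fun i _ => Finset.sum_le_sum fun m hm => ?_
        exact hterm i m (by simpa using hm)
    _ = (∑ i ∈ univ.filter (fun i : Fin N => (i:ℕ) < k),
          ∑ m ∈ univ.filter (fun m : Fin N => m ≠ i),
            hcut ℓ (x i - x m) * ((if i = j then 1 else 0) + (if m = j then 1 else 0))) / ℓ := by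
        rw [Finset.sum_div]
        exact Finset.sum_congr rfl fun i _ => by rw [Finset.sum_div]

lemma sq_exp_bound {t : ℝ} (ht : 0 ≤ t) :
    t ^ 2 * Real.exp (-t) ≤ 16 * Real.exp (-(t / 2)) := by
  have h1 : t ≤ 4 * Real.exp (t / 4) := by
    have := Real.add_one_le_exp (t / 4)
    nlinarith [Real.exp_pos (t / 4)]
  have h2 : t ^ 2 ≤ 16 * Real.exp (t / 2) := by
    have hm := mul_self_le_mul_self ht h1
    have he : Real.exp (t / 4) * Real.exp (t / 4) = Real.exp (t / 2) := by
      rw [← Real.exp_add]; ring_nf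
    nlinarith [Real.exp_pos (t / 4)]
  calc t ^ 2 * Real.exp (-t) ≤ 16 * Real.exp (t / 2) * Real.exp (-t) := by
        nlinarith [Real.exp_pos (-t)]
    _ = 16 * Real.exp (-(t / 2)) := by rw [mul_assoc, ← Real.exp_add]; ring_nf

/-- The square of the norm of the gradient of `Θ_k^{(n)}` with respect to the
variable `x_j`. -/
def gradSq (N : ℕ) (ℓ ε : ℝ) (k n : ℕ) (j : Fin N)
    (x : Fin N → EuclideanSpace ℝ (Fin 3)) : ℝ :=
  ∑ α : Fin 3,
    (fderiv ℝ (ThetaCut N ℓ ε k n) x (Pi.single j (EuclideanSpace.single α (1 : ℝ)))) ^ 2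

/-- `Σ_{j=1}^N |∇_j Θ_k^{(n)}|² / Θ_k^{(n)} ≤ C ℓ^{−2} Θ_k^{(n−1)}`, where the constant
depends only on `ε` (not on `N`, `k`, `n`, `ℓ`). -/
theorem stmt_7 (ε : ℝ) (hε : 0 < ε) (hε1 : ε ≤ 1) :
    ∃ C : ℝ, 0 < C ∧
      ∀ (N : ℕ) (ℓ : ℝ), 0 < ℓ → ℓ ≤ 1 →
      ∀ k n : ℕ, 1 ≤ n → k ≤ N →
      ∀ x : Fin N → EuclideanSpace ℝ (Fin 3),
        (∑ j : Fin N, gradSq N ℓ ε k n j x / ThetaCut N ℓ ε k n x) ≤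
          C * ℓ ^ (-(2 : ℝ)) * ThetaCut N ℓ ε k (n - 1) x := by
  classical
  refine ⟨192, by norm_num, ?_⟩
  intro N ℓ hℓ hℓ1 k n hn hk x
  have hℓε : (0:ℝ) < ℓ ^ ε := Real.rpow_pos_of_pos hℓ ε
  set μ : ℝ := (2:ℝ)^n / ℓ^ε with hμdef
  have hμ : 0 < μ := by rw [hμdef]; positivity
  set DS : (Fin N → EuclideanSpace ℝ (Fin 3)) →L[ℝ] ℝ :=
    ∑ i ∈ univ.filter (fun i : Fin N => (i:ℕ) < k),
      ∑ m ∈ univ.filter (fun m : Fin N => m ≠ i),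
        (Dh ℓ (x i - x m)).comp (Lproj N i m) with hDSdef
  set S : ℝ := ∑ i ∈ univ.filter (fun i : Fin N => (i:ℕ) < k),
      ∑ m ∈ univ.filter (fun m : Fin N => m ≠ i), hcut ℓ (x i - x m) with hSdef
  set W : Fin N → ℝ := fun j => ∑ i ∈ univ.filter (fun i : Fin N => (i:ℕ) < k),
      ∑ m ∈ univ.filter (fun m : Fin N => m ≠ i),
        hcut ℓ (x i - x m) * ((if i = j then 1 else 0) + (if m = j then 1 else 0)) with hWdef
  have hS0 : 0 ≤ S := by
    rw [hSdef]
    exact Finset.sum_nonneg fun i _ => Finset.sum_nonneg fun m _ => (hcut_pos _).le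
  have hW0 : ∀ j, 0 ≤ W j := by
    intro j; rw [hWdef]
    refine Finset.sum_nonneg fun i _ => Finset.sum_nonneg fun m _ => ?_
    have := (hcut_pos (ℓ := ℓ) (x i - x m)).le
    positivity
  have hWsum : ∑ j : Fin N, W j = 2 * S := by
    rw [hWdef, hSdef]
    rw [Finset.sum_comm]
    rw [Finset.mul_sum]
    refine Finset.sum_congr rfl fun i _ => ?_
    rw [Finset.sum_comm, Finset.mul_sum]
    refine Finset.sum_congr rfl fun m _ => ?_
    rw [← Finset.mul_sum]
    have : (∑ j : Fin N, (((if i = j then (1:ℝ) else 0) + (if m = j then 1 else 0)))) = 2 := by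
      rw [Finset.sum_add_distrib]
      simp [Finset.sum_ite_eq]
      norm_num
    rw [this]; ring
  have hWle : ∀ j, W j ≤ 2 * S := by
    intro j
    rw [← hWsum]
    exact Finset.single_le_sum (fun j _ => hW0 j) (Finset.mem_univ j)
  have hWsq : ∑ j : Fin N, (W j)^2 ≤ 4 * S^2 := by
    calc ∑ j : Fin N, (W j)^2 ≤ ∑ j : Fin N, W j * (2*S) := by
          refine Finset.sum_le_sum fun j _ => ?_
          have h1 := hWle j; have h2 := hW0 j; nlinarith
      _ = (∑ j : Fin N, W j) * (2*S) := by rw [← Finset.sum_mul]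
      _ = 4 * S^2 := by rw [hWsum]; ring
  have key : HasFDerivAt (ThetaCut N ℓ ε k n) ((ThetaCut N ℓ ε k n x) • ((-μ) • DS)) x :=
    theta_fderiv N ℓ ε k n hℓ x
  set Θ : ℝ := ThetaCut N ℓ ε k n x with hΘdef
  have hΘexp : Θ = Real.exp (-(μ * S)) := by
    rw [hΘdef]; simp only [ThetaCut]; rw [← hSdef]; congr 1; rw [hμdef]; ring
  have hΘpos : 0 < Θ := by rw [hΘexp]; exact Real.exp_pos _
  have happ : ∀ (j : Fin N) (α : Fin 3),
      fderiv ℝ (ThetaCut N ℓ ε k n) x (Pi.single j (EuclideanSpace.single α (1:ℝ)))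
        = Θ * (-μ * DS (Pi.single j (EuclideanSpace.single α (1:ℝ)))) := by
    intro j α
    rw [key.fderiv]
    simp [ContinuousLinearMap.smul_apply, smul_eq_mul]
  have hgrad : ∀ j : Fin N, gradSq N ℓ ε k n j x =
      ∑ α : Fin 3, (Θ * (-μ * DS (Pi.single j (EuclideanSpace.single α (1:ℝ)))))^2 := by
    intro j
    simp only [gradSq]
    exact Finset.sum_congr rfl fun α _ => by rw [happ]
  have hjb : ∀ j : Fin N, gradSq N ℓ ε k n j x / Θ ≤ Θ * (3 * (μ * (W j / ℓ))^2) := by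
    intro j
    rw [div_le_iff₀ hΘpos, hgrad j]
    have hstep : ∀ α : Fin 3,
        (Θ * (-μ * DS (Pi.single j (EuclideanSpace.single α (1:ℝ)))))^2
          ≤ Θ^2 * (μ * (W j / ℓ))^2 := by
      intro α
      have hb : |DS (Pi.single j (EuclideanSpace.single α (1:ℝ)))| ≤ W j / ℓ := by
        rw [hDSdef, hWdef]
        exact DS_apply_bound hℓ k x j α
      have ht2 : (DS (Pi.single j (EuclideanSpace.single α (1:ℝ))))^2 ≤ (W j / ℓ)^2 := by
        rw [← sq_abs]
        exact pow_le_pow_left₀ (abs_nonneg _) hb 2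
      calc (Θ * (-μ * DS (Pi.single j (EuclideanSpace.single α (1:ℝ)))))^2
          = (Θ*μ)^2 * (DS (Pi.single j (EuclideanSpace.single α (1:ℝ))))^2 := by ring
        _ ≤ (Θ*μ)^2 * (W j / ℓ)^2 := mul_le_mul_of_nonneg_left ht2 (sq_nonneg _)
        _ = Θ^2 * (μ * (W j / ℓ))^2 := by ring
    calc ∑ α : Fin 3, (Θ * (-μ * DS (Pi.single j (EuclideanSpace.single α (1:ℝ)))))^2
        ≤ ∑ _α : Fin 3, Θ^2 * (μ * (W j / ℓ))^2 := Finset.sum_le_sum fun α _ => hstep α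
      _ = 3 * (Θ^2 * (μ * (W j / ℓ))^2) := by
          rw [Finset.sum_const]
          simp [Fintype.card_fin]
      _ = Θ * (3 * (μ * (W j / ℓ))^2) * Θ := by ring
  have hfac : (0:ℝ) ≤ Θ * 3 * μ^2 / ℓ^2 := by
    apply div_nonneg _ (by positivity)
    have := hΘpos.le
    positivity
  calc ∑ j : Fin N, gradSq N ℓ ε k n j x / Θ
      ≤ ∑ j : Fin N, Θ * (3 * (μ * (W j / ℓ))^2) := Finset.sum_le_sum fun j _ => hjb j
    _ = ∑ j : Fin N, (Θ * 3 * μ^2 / ℓ^2) * (W j)^2 := by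
        refine Finset.sum_congr rfl fun j _ => ?_
        field_simp
    _ = (Θ * 3 * μ^2 / ℓ^2) * ∑ j : Fin N, (W j)^2 := by rw [← Finset.mul_sum]
    _ ≤ (Θ * 3 * μ^2 / ℓ^2) * (4 * S^2) := mul_le_mul_of_nonneg_left hWsq hfac
    _ = 12 / ℓ^2 * ((μ*S)^2 * Θ) := by ring
    _ ≤ 12 / ℓ^2 * (16 * Real.exp (-(μ*S/2))) := by
        have hbound : (μ*S)^2 * Θ ≤ 16 * Real.exp (-(μ*S/2)) := by
          rw [hΘexp]
          have := sq_exp_bound (mul_nonneg hμ.le hS0)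
          convert this using 3 <;> ring
        have h12 : (0:ℝ) ≤ 12 / ℓ^2 := by positivity
        exact mul_le_mul_of_nonneg_left hbound h12
    _ = 192 * ℓ ^ (-(2:ℝ)) * ThetaCut N ℓ ε k (n-1) x := by
        have hrp : ℓ ^ (-(2:ℝ)) = (ℓ^2)⁻¹ := by
          rw [Real.rpow_neg hℓ.le]
          congr 1
          rw [show (2:ℝ) = ((2:ℕ):ℝ) by norm_num, Real.rpow_natCast]
        have h2n : (2:ℝ)^(n-1) * 2 = 2^n := by
          rw [← pow_succ]
          congr 1
          omega
        have hΘ' : ThetaCut N ℓ ε k (n-1) x = Real.exp (-(μ*S/2)) := by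
          simp only [ThetaCut]
          rw [← hSdef]
          congr 1
          rw [hμdef, ← h2n]
          field_simp
        rw [hrp, hΘ']
        field_simp
        ring


end
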